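/- Let G = (S, M_e, M_s, ρ) be a game structure, let d ⊆ S be a set of target states, and let (base, step, conc) be a semantic acceleration lemma over S such that base ⊆ d and such that for every s ∈ conc with s ∉ d we have s ∈ Attr_Sys(d ∪ {s' ∈ S | (s, s') ∈ step}). Then conc ⊆ Attr_Sys(d). -/

import Mathlib

/-- A two-player game structure: states `S`, environment moves `Me`, system moves `Ms`,
and a transition relation such that every state has a successor and the two players'
moves uniquely determine the successor. -/
structure GameStructure (S : Type*) (Me : Type*) (Ms : Type*) where
  rel : S → Me → Ms → S → Prop
  exists_succ : ∀ s : S, ∃ (me : Me) (ms : Ms) (s' : S), rel s me ms s'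
  deterministic : ∀ (s : S) (me : Me) (ms : Ms) (s₁ s₂ : S),
    rel s me ms s₁ → rel s me ms s₂ → s₁ = s₂

variable {S Me Ms : Type*}

/-- The environment moves enabled in a state. -/
def enabledE (G : GameStructure S Me Ms) (s : S) : Set Me :=
  {me | ∃ (ms : Ms) (s' : S), G.rel s me ms s'}

/-- The system moves enabled in a state after a given environment move. -/
def enabledS (G : GameStructure S Me Ms) (s : S) (me : Me) : Set Ms :=
  {ms | ∃ s' : S, G.rel s me ms s'}

/-- A strategy for the system player: it maps a nonempty finite sequence of states,
given as the pair of its strict prefix `h = (s₀, …, s_{n-1})` and its last state `s = sₙ`,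
together with an environment move, to a system move; on enabled environment moves it
must choose an enabled system move. -/
structure SysStrategy (G : GameStructure S Me Ms) where
  act : List S → S → Me → Ms
  act_enabled : ∀ (h : List S) (s : S) (me : Me),
    me ∈ enabledE G s → act h s me ∈ enabledS G s me

/-- A strategy for the environment player: it maps a nonempty finite sequence of states,
given as the pair of its strict prefix `h = (s₀, …, s_{n-1})` and its last state `s = sₙ`,
to an enabled environment move. -/
structure EnvStrategy (G : GameStructure S Me Ms) where
  act : List S → S → Me
  act_enabled : ∀ (h : List S) (s : S), act h s ∈ enabledE G s

/-- `π` is a play consistent with the system strategy `σ`: at every step `n` there is an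
enabled environment move `me` such that the transition from `π n` under `me` and the
move chosen by `σ` on the history `(π 0, …, π n)` leads to `π (n+1)`. -/
def SysPlay (G : GameStructure S Me Ms) (σ : SysStrategy G) (π : ℕ → S) : Prop :=
  ∀ n : ℕ, ∃ me ∈ enabledE G (π n),
    G.rel (π n) me (σ.act ((List.range n).map π) (π n) me) (π (n + 1))

/-- `π` is a play consistent with the environment strategy `σ`: at every step `n` there
is a system move `ms` enabled after the environment move chosen by `σ` on the history
`(π 0, …, π n)` such that the corresponding transition leads to `π (n+1)`. -/
def EnvPlay (G : GameStructure S Me Ms) (σ : EnvStrategy G) (π : ℕ → S) : Prop :=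
  ∀ n : ℕ, ∃ ms ∈ enabledS G (π n) (σ.act ((List.range n).map π) (π n)),
    G.rel (π n) (σ.act ((List.range n).map π) (π n)) ms (π (n + 1))

/-- The system attractor of `T`: states from which the system has a strategy forcing
every consistent play to visit `T`. -/
def attrSys (G : GameStructure S Me Ms) (T : Set S) : Set S :=
  {s | ∃ σ : SysStrategy G, ∀ π : ℕ → S, π 0 = s → SysPlay G σ π → ∃ n : ℕ, π n ∈ T}

/-- The environment attractor of `T`: states from which the environment has a strategy
forcing every consistent play to visit `T`. -/
def attrEnv (G : GameStructure S Me Ms) (T : Set S) : Set S :=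
  {s | ∃ σ : EnvStrategy G, ∀ π : ℕ → S, π 0 = s → EnvPlay G σ π → ∃ n : ℕ, π n ∈ T}

/-- The controllable predecessor operator for the system player. -/
def cpreSys (G : GameStructure S Me Ms) (X : Set S) : Set S :=
  {s | ∀ me ∈ enabledE G s, ∃ ms ∈ enabledS G s me, ∀ s' : S, G.rel s me ms s' → s' ∈ X}

/-- The controllable predecessor operator for the environment player. -/
def cpreEnv (G : GameStructure S Me Ms) (X : Set S) : Set S :=
  {s | ∃ me ∈ enabledE G s, ∀ ms ∈ enabledS G s me, ∀ s' : S, G.rel s me ms s' → s' ∈ X}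

/-- A semantic acceleration lemma over a type `A`: a triple `(base, step, conc)` of
subsets such that (i) every infinite `step`-sequence starting in `conc` eventually
reaches `base`, and (ii) `conc \ base` is closed under `step`-successors. -/
def IsAccelLemma {A : Type*} (base : Set A) (step : Set (A × A)) (conc : Set A) : Prop :=
  (∀ α : ℕ → A, α 0 ∈ conc → (∀ i : ℕ, (α i, α (i + 1)) ∈ step) → ∃ k : ℕ, α k ∈ base) ∧
  (∀ a ∈ conc, a ∉ base → ∀ a' : A, (a, a') ∈ step → a' ∈ conc)

section AccelAux

attribute [local instance] Classical.propDecidable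

/-- A default system strategy: pick any enabled move. -/
noncomputable def defaultStrat (G : GameStructure S Me Ms) : SysStrategy G where
  act := fun _ s me =>
    if h : me ∈ enabledE G s then h.choose else ((G.exists_succ s).choose_spec).choose
  act_enabled := by
    intro h s me hme
    simp only [dif_pos hme]
    exact hme.choose_spec

/-- One step of the phase machine: track the current anchor, the history within the
current phase, and the previous state; switch anchors on `step`-edges. -/
noncomputable def mstepA (d : Set S) (step : Set (S × S)) :
    Option (S × List S × S) → S → Option (S × List S × S)
  | none, s' => if s' ∈ d then none else some (s', [], s')
  | some (a, h, c), s' =>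
      if s' ∈ d then none
      else if (a, s') ∈ step then some (s', [], s')
      else some (a, h ++ [c], s')

/-- Run the phase machine on a finite history. -/
noncomputable def runA (d : Set S) (step : Set (S × S)) (l : List S) :
    Option (S × List S × S) :=
  l.foldl (mstepA d step) none

/-- The composite strategy: play the sub-strategy of the current anchor. -/
noncomputable def bigStrat (G : GameStructure S Me Ms) (d : Set S) (step : Set (S × S))
    (σ : S → SysStrategy G) : SysStrategy G where
  act := fun h s me =>
    match runA d step (h ++ [s]) with
    | some (a, hist, _) => (σ a).act hist s me
    | none => (defaultStrat G).act h s me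
  act_enabled := by
    intro h s me hme
    cases hr : runA d step (h ++ [s]) with
    | none =>
        exact (defaultStrat G).act_enabled h s me hme
    | some p =>
        obtain ⟨a, hist, c⟩ := p
        exact (σ a).act_enabled hist s me hme

theorem bigStrat_act_eq (G : GameStructure S Me Ms) (d : Set S) (step : Set (S × S))
    (σ : S → SysStrategy G) (h : List S) (s : S) (me : Me) (a : S) (hist : List S) (c : S)
    (hr : runA d step (h ++ [s]) = some (a, hist, c)) :
    (bigStrat G d step σ).act h s me = (σ a).act hist s me := by
  show (match runA d step (h ++ [s]) with
    | some (a, hist, _) => (σ a).act hist s me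
    | none => (defaultStrat G).act h s me) = _
  rw [hr]

end AccelAux

/-- Lemma 6.3 (soundness of attractor acceleration, system player): if
`(base, step, conc)` is a semantic acceleration lemma over the states with
`base ⊆ d`, and from every state `s ∈ conc \ d` the system can enforce reaching
`d` or a `step`-successor of `s`, then `conc ⊆ Attr_Sys(d)`. -/
theorem accel_subset_attrSys (G : GameStructure S Me Ms) (d : Set S)
    (base conc : Set S) (step : Set (S × S))
    (hlem : IsAccelLemma base step conc)
    (hbase : base ⊆ d)
    (hstep : ∀ s ∈ conc, s ∉ d → s ∈ attrSys G (d ∪ {s' : S | (s, s') ∈ step})) :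
    conc ⊆ attrSys G d := by
  classical
  -- no self-loops in `conc \ d`
  have hself : ∀ s ∈ conc, s ∉ d → (s, s) ∉ step := by
    intro s hs hsd hst
    obtain ⟨k, hk⟩ := hlem.1 (fun _ => s) hs (fun _ => hst)
    exact hsd (hbase hk)
  -- choose sub-strategies
  have hσ : ∀ a : S, ∃ σ : SysStrategy G, a ∈ conc → a ∉ d →
      ∀ π : ℕ → S, π 0 = a → SysPlay G σ π →
        ∃ n, π n ∈ d ∪ {s' : S | (a, s') ∈ step} := by
    intro a
    by_cases h : a ∈ conc ∧ a ∉ d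
    · obtain ⟨σ, hσ⟩ := hstep a h.1 h.2
      exact ⟨σ, fun _ _ => hσ⟩
    · exact ⟨defaultStrat G, fun h1 h2 => absurd ⟨h1, h2⟩ h⟩
  choose σsub hσsub using hσ
  intro s0 hs0
  refine ⟨bigStrat G d step σsub, ?_⟩
  intro π hπ0 hplay
  by_contra hnd
  push_neg at hnd
  -- the machine run along the play
  set r : ℕ → Option (S × List S × S) :=
    fun n => runA d step ((List.range (n + 1)).map π) with hr_def
  have hsnoc : ∀ n : ℕ, (List.range n).map π ++ [π n] = (List.range (n + 1)).map π := by
    intro n; simp [List.range_succ]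
  have hr0 : r 0 = some (π 0, [], π 0) := by
    simp [hr_def, runA, mstepA, hnd 0, List.range_succ]
  have hrsucc : ∀ n, r (n + 1) = mstepA d step (r n) (π (n + 1)) := by
    intro n
    simp only [hr_def, runA]
    rw [← hsnoc (n + 1), List.foldl_append]
    rfl
  -- core invariant of the run
  have core : ∀ n, ∃ a h, r n = some (a, h, π n) ∧ a ∈ conc ∧ a ∉ d := by
    intro n
    induction n with
    | zero => exact ⟨π 0, [], hr0, hπ0 ▸ hs0, hnd 0⟩
    | succ n ih =>
        obtain ⟨a, h, hrn, hac, had⟩ := ih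
        rw [hrsucc n, hrn]
        by_cases hst : (a, π (n + 1)) ∈ step
        · exact ⟨π (n + 1), [], by simp [mstepA, hnd (n + 1), hst],
            hlem.2 a hac (fun hb => had (hbase hb)) _ hst, hnd (n + 1)⟩
        · exact ⟨a, h ++ [π n], by simp [mstepA, hnd (n + 1), hst], hac, had⟩
  choose A H hrn hAc hAd using core
  -- transition behaviour of the anchor/history sequences
  have hswitch : ∀ n, ((A n, π (n + 1)) ∈ step → A (n + 1) = π (n + 1) ∧ H (n + 1) = []) ∧
      ((A n, π (n + 1)) ∉ step → A (n + 1) = A n ∧ H (n + 1) = H n ++ [π n]) := by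
    intro n
    have h1 := hrn (n + 1)
    rw [hrsucc n, hrn n] at h1
    constructor <;> intro hst
    · simp only [mstepA, if_neg (hnd (n + 1)), if_pos hst, Option.some.injEq,
        Prod.mk.injEq] at h1
      exact ⟨h1.1.symm, h1.2.1.symm⟩
    · simp only [mstepA, if_neg (hnd (n + 1)), if_neg hst, Option.some.injEq,
        Prod.mk.injEq] at h1
      exact ⟨h1.1.symm, h1.2.1.symm⟩
  have hA0 : A 0 = π 0 ∧ H 0 = [] := by
    have h1 := hrn 0
    rw [hr0] at h1
    simp only [Option.some.injEq, Prod.mk.injEq] at h1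
    exact ⟨h1.1.symm, h1.2.1.symm⟩
  -- every phase eventually switches, producing a `step`-edge to a new phase start
  have key : ∀ m, π m = A m → H m = [] → π m ∈ conc →
      ∃ m', (π m' = A m' ∧ H m' = [] ∧ π m' ∈ conc) ∧ (π m, π m') ∈ step := by
    intro m hma hmh hmc
    have hmd := hnd m
    have hex : ∃ k, A (m + (k + 1)) ≠ A m := by
      by_contra hcon
      push_neg at hcon
      have hconst : ∀ k, A (m + k) = A m := by
        intro k
        cases k with
        | zero => rfl
        | succ k => exact hcon k
      -- in a never-ending phase the histories are the phase prefixes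
      have hhist : ∀ k, H (m + k) = (List.range k).map (fun j => π (m + j)) := by
        intro k
        induction k with
        | zero => simpa using hmh
        | succ k ih =>
            have hst : (A (m + k), π (m + k + 1)) ∉ step := by
              intro hst
              have he := ((hswitch (m + k)).1 hst).1
              apply hself (π m) hmc hmd
              rw [hconst k] at hst
              have h2 : π (m + k + 1) = A m := by
                rw [← he]; exact hconst (k + 1)
              rw [h2] at hst
              rw [hma]; exact hst
            have he := (hswitch (m + k)).2 hst
            have : H (m + (k + 1)) = H (m + k) ++ [π (m + k)] := he.2
            rw [this, ih, List.range_succ, List.map_append]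
            simp
      -- the play shifted to the phase start is consistent with the anchor's strategy
      have hsp : SysPlay G (σsub (A m)) (fun k => π (m + k)) := by
        intro k
        obtain ⟨me, hme, hrel⟩ := hplay (m + k)
        refine ⟨me, hme, ?_⟩
        have hrun : runA d step ((List.range (m + k)).map π ++ [π (m + k)]) =
            some (A m, H (m + k), π (m + k)) := by
          rw [hsnoc (m + k), ← hconst k]
          exact hrn (m + k)
        have hact := bigStrat_act_eq G d step σsub ((List.range (m + k)).map π)
          (π (m + k)) me (A m) (H (m + k)) (π (m + k)) hrun
        rw [hact, hhist k] at hrel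
        exact hrel
      obtain ⟨nn, hnn⟩ := hσsub (A m) (hma ▸ hmc) (hma ▸ hmd) (fun k => π (m + k))
        (by simpa using hma) hsp
      rcases hnn with hnn | hnn
      · exact hnd (m + nn) hnn
      · have hnn' : (A m, π (m + nn)) ∈ step := hnn
        cases nn with
        | zero =>
            apply hself (π m) hmc hmd
            have h0 : π (m + 0) = π m := by simp
            rw [h0] at hnn'
            rw [hma] at hnn' ⊢
            exact hnn'
        | succ j =>
            have hst : (A (m + j), π (m + j + 1)) ∈ step := by
              rw [hconst j]; exact hnn'
            have he := ((hswitch (m + j)).1 hst).1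
            have h2 : π (m + j + 1) = A m := by
              rw [← he]; exact hconst (j + 1)
            apply hself (π m) hmc hmd
            rw [hconst j] at hst
            rw [h2] at hst
            rw [hma]; exact hst
    -- first switch time
    set k0 := Nat.find hex with hk0
    have hconst' : ∀ j ≤ k0, A (m + j) = A m := by
      intro j hj
      cases j with
      | zero => rfl
      | succ j =>
          have := Nat.find_min hex (m := j) (by omega)
          simpa using not_not.mp this
    have hk0spec : A (m + (k0 + 1)) ≠ A m := Nat.find_spec hex
    have hst : (A (m + k0), π (m + k0 + 1)) ∈ step := by
      by_contra hst
      have he := ((hswitch (m + k0)).2 hst).1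
      apply hk0spec
      rw [show m + (k0 + 1) = m + k0 + 1 from rfl, he]
      exact hconst' k0 le_rfl
    have he := (hswitch (m + k0)).1 hst
    have hstep' : (A m, π (m + k0 + 1)) ∈ step := by
      rw [← hconst' k0 le_rfl]; exact hst
    refine ⟨m + k0 + 1, ⟨he.1.symm, he.2, ?_⟩, ?_⟩
    · exact hlem.2 (A m) (hma ▸ hmc) (fun hb => (hma ▸ hmd) (hbase hb)) _ hstep'
    · rw [hma]; exact hstep'
  -- iterate phase starts to get an infinite `step`-chain, contradicting acceleration
  have hQ0 : π 0 = A 0 ∧ H 0 = [] ∧ π 0 ∈ conc := ⟨hA0.1.symm, hA0.2, hπ0 ▸ hs0⟩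
  let Q : ℕ → Prop := fun m => π m = A m ∧ H m = [] ∧ π m ∈ conc
  let g : {m : ℕ // Q m} → {m : ℕ // Q m} := fun x =>
    ⟨(key x.1 x.2.1 x.2.2.1 x.2.2.2).choose, (key x.1 x.2.1 x.2.2.1 x.2.2.2).choose_spec.1⟩
  have hg : ∀ x : {m : ℕ // Q m}, (π x.1, π (g x).1) ∈ step := fun x =>
    (key x.1 x.2.1 x.2.2.1 x.2.2.2).choose_spec.2
  let T : ℕ → {m : ℕ // Q m} := fun i => g^[i] ⟨0, hQ0⟩
  have hTsucc : ∀ i, T (i + 1) = g (T i) := by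
    intro i
    simp only [T, Function.iterate_succ_apply']
  obtain ⟨k, hk⟩ := hlem.1 (fun i => π (T i).1) (T 0).2.2.2
    (fun i => by
      show (π (T i).1, π (T (i + 1)).1) ∈ step
      rw [hTsucc i]; exact hg (T i))
  exact hnd (T k).1 (hbase hk)
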